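/- Let g be an exponentially multiplicative function (g(p^k) = g(p)^k/k!) with |g(p)| ≤ β on primes, and let G(s) = ∑_{n≥1} g(n) n^{-s} = exp(∑_p g(p) p^{-s}) for Re(s) > 1, G₀(σ) = ∑_{n≥1} |g(n)| n^{-σ}. Then for 1 < σ ≤ 2 and y = exp(1/(σ−1)), |G(s)| ≪ G₀(σ) · exp(−∑_{p ≤ y} (|g(p)| − Re(g(p) p^{-it})) p^{-1}), where s = σ + it, with implied constant depending only on β. -/

import Mathlib

open Finset


lemma theta_le (n : ℕ) :
    ∑ p ∈ (range (n + 1)).filter Nat.Prime, Real.log p ≤ n * Real.log 4 := by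
  have h1 : ∑ p ∈ (range (n + 1)).filter Nat.Prime, Real.log p
      = Real.log (primorial n) := by
    rw [primorial, Nat.cast_prod, Real.log_prod]
    intro p hp
    have := (mem_filter.mp hp).2.two_le
    positivity
  rw [h1]
  calc Real.log (primorial n) ≤ Real.log ((4:ℕ) ^ n) := by
        apply Real.log_le_log (by exact_mod_cast (primorial_pos n))
        exact_mod_cast primorial_le_4_pow n
    _ = n * Real.log 4 := by
        push_cast
        rw [Real.log_pow]


lemma telescope_inv {p M : ℕ} (h : p ≤ M) :
    ∑ n ∈ Ico p M, ((1:ℝ)/n - 1/(n+1)) = 1/p - 1/M := by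
  have key : ∀ m : ℕ, ∑ n ∈ range m, ((1:ℝ)/n - 1/(n+1)) = - (1/m) := by
    intro m
    induction m with
    | zero => simp
    | succ k ih =>
      rw [Finset.sum_range_succ, ih]
      rcases Nat.eq_zero_or_pos k with hk | hk
      · subst hk; norm_num
      · have : (k:ℝ) ≠ 0 := by positivity
        push_cast
        field_simp
        ring
  rw [Finset.sum_Ico_eq_sub _ h, key, key]
  rcases Nat.eq_zero_or_pos p with hp | hp
  · subst hp
    norm_num
  · ring

lemma mertens_bound (N : ℕ) :
    ∑ p ∈ (range (N + 1)).filter Nat.Prime, Real.log p / p ≤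
      Real.log 4 * (2 + Real.log (N + 1)) := by
  have hsplit : ∑ p ∈ (range (N + 1)).filter Nat.Prime, Real.log p / p
      = (∑ p ∈ (range (N + 1)).filter Nat.Prime, Real.log p) / (N + 1)
        + ∑ p ∈ (range (N + 1)).filter Nat.Prime,
            ∑ n ∈ Ico p (N + 1), Real.log p * ((1:ℝ)/n - 1/(n+1)) := by
    rw [Finset.sum_div, ← Finset.sum_add_distrib]
    apply Finset.sum_congr rfl
    intro p hp
    have hple : p ≤ N + 1 := (mem_range.mp (mem_filter.mp hp).1).le
    rw [← Finset.mul_sum, telescope_inv hple, div_eq_mul_one_div (Real.log p) (p:ℝ)]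
    push_cast
    ring
  have hswap : ∑ p ∈ (range (N + 1)).filter Nat.Prime,
      ∑ n ∈ Ico p (N + 1), Real.log p * ((1:ℝ)/n - 1/(n+1))
      = ∑ n ∈ range (N + 1), ∑ p ∈ (range (n + 1)).filter Nat.Prime,
          Real.log p * ((1:ℝ)/n - 1/(n+1)) := by
    apply Finset.sum_comm'
    intro p n
    simp only [mem_filter, mem_range, mem_Ico]
    constructor
    · rintro ⟨⟨hpN, hpp⟩, hpn, hnN⟩
      exact ⟨⟨Nat.lt_succ_of_le hpn, hpp⟩, hnN⟩
    · rintro ⟨⟨hpn, hpp⟩, hnN⟩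
      exact ⟨⟨lt_of_le_of_lt (Nat.lt_succ_iff.mp hpn) hnN, hpp⟩, Nat.lt_succ_iff.mp hpn, hnN⟩
  have hθ : ∀ n : ℕ, (0:ℝ) ≤ ∑ p ∈ (range (n + 1)).filter Nat.Prime, Real.log p := by
    intro n
    apply Finset.sum_nonneg
    intro p hp
    have := (mem_filter.mp hp).2.two_le
    apply Real.log_nonneg
    exact_mod_cast Nat.one_le_of_lt this
  have hterm : ∀ n ∈ range (N + 1),
      ∑ p ∈ (range (n + 1)).filter Nat.Prime, Real.log p * ((1:ℝ)/n - 1/(n+1))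
        ≤ Real.log 4 * (1/(n+1)) := by
    intro n _
    rw [← Finset.sum_mul]
    rcases Nat.eq_zero_or_pos n with hn | hn
    · subst hn
      have : ((range 1).filter Nat.Prime) = ∅ := by decide
      rw [this]
      simp
      positivity
    · have hδ0 : (0:ℝ) ≤ (1:ℝ)/n - 1/(n+1) := by
        have h1 : (0:ℝ) < n := by exact_mod_cast hn
        rw [sub_nonneg]
        apply div_le_div_of_nonneg_left one_pos.le h1
        · linarith
      calc (∑ p ∈ (range (n + 1)).filter Nat.Prime, Real.log p) * ((1:ℝ)/n - 1/(n+1))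
          ≤ (n * Real.log 4) * ((1:ℝ)/n - 1/(n+1)) :=
            mul_le_mul_of_nonneg_right (theta_le n) hδ0
        _ = Real.log 4 * (1/(n+1)) := by
            have h1 : (n:ℝ) ≠ 0 := by positivity
            field_simp
            ring
  rw [hsplit, hswap]
  have hpart1 : (∑ p ∈ (range (N + 1)).filter Nat.Prime, Real.log p) / (N + 1)
      ≤ Real.log 4 := by
    rw [div_le_iff₀ (by positivity)]
    calc ∑ p ∈ (range (N + 1)).filter Nat.Prime, Real.log p ≤ N * Real.log 4 :=
          theta_le N
      _ ≤ Real.log 4 * (N + 1) := by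
          have : (0:ℝ) ≤ Real.log 4 := Real.log_nonneg (by norm_num)
          nlinarith
  have hpart2 : ∑ n ∈ range (N + 1), ∑ p ∈ (range (n + 1)).filter Nat.Prime,
        Real.log p * ((1:ℝ)/n - 1/(n+1))
      ≤ Real.log 4 * (1 + Real.log (N + 1)) := by
    calc ∑ n ∈ range (N + 1), ∑ p ∈ (range (n + 1)).filter Nat.Prime,
          Real.log p * ((1:ℝ)/n - 1/(n+1))
        ≤ ∑ n ∈ range (N + 1), Real.log 4 * (1/(n+1)) := Finset.sum_le_sum hterm
      _ = Real.log 4 * ((harmonic (N + 1) : ℚ) : ℝ) := by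
          rw [← Finset.mul_sum]
          congr 1
          rw [harmonic]
          push_cast
          apply Finset.sum_congr rfl
          intro i _
          rw [one_div]
      _ ≤ Real.log 4 * (1 + Real.log (N + 1)) := by
          apply mul_le_mul_of_nonneg_left _ (Real.log_nonneg (by norm_num))
          have := harmonic_le_one_add_log (N + 1)
          push_cast at this ⊢
          linarith
  linarith

lemma natCast_pow_cpow (p : ℕ) (e : ℕ) (s : ℂ) :
    ((p ^ e : ℕ) : ℂ) ^ s = ((p : ℂ) ^ s) ^ e := by
  have him : (Complex.log p * (e : ℂ)).im = 0 := by
    simp [Complex.mul_im, Complex.log_im]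
  rw [Nat.cast_pow, ← Complex.cpow_natCast (p:ℂ) e,
    ← Complex.cpow_mul _ (by rw [him]; exact neg_lt_zero.mpr Real.pi_pos)
      (by rw [him]; exact Real.pi_pos.le),
    Complex.cpow_nat_mul]

section Main

variable (g : ℕ → ℂ) (σ t : ℝ)

set_option maxHeartbeats 2000000 in
theorem aux_main (β : ℝ) (hβ : 0 < β) (hg1 : g 1 = 1)
    (hgpk : ∀ (p k : ℕ), p.Prime → 1 ≤ k → g (p ^ k) = g p ^ k / (Nat.factorial k : ℂ))
    (hgmul : ∀ m n : ℕ, Nat.Coprime m n → g (m * n) = g m * g n)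
    (hgβ : ∀ p : ℕ, p.Prime → ‖g p‖ ≤ β)
    (hσ1 : 1 < σ) (hσ2 : σ ≤ 2) :
    ‖∑' n : ℕ, g n / (n : ℂ) ^ ((σ : ℂ) + t * Complex.I)‖ ≤
      Real.exp (12 * β) * (∑' n : ℕ, ‖g n‖ / (n : ℝ) ^ σ) *
        Real.exp (- ∑ p ∈ (Finset.range (⌊Real.exp (1 / (σ - 1))⌋₊ + 1)).filter Nat.Prime,
          (‖g p‖ - (g p * (p : ℂ) ^ (-(t * Complex.I))).re) / (p : ℝ)) := by
  have hσ0 : 0 < σ - 1 := by linarith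
  set s : ℂ := (σ : ℂ) + t * Complex.I with hs_def
  have hs_re : s.re = σ := by simp [hs_def]
  have hs_ne : s ≠ 0 := by
    intro h
    have := congrArg Complex.re h
    rw [hs_re] at this
    simp at this
    linarith
  set f : ℕ → ℂ := fun n => g n / (n : ℂ) ^ s with hf_def
  set z : ℕ → ℂ := fun p => g p * (p : ℂ) ^ (-s) with hz_def
  set w : ℕ → ℝ := fun p => ‖z p‖ with hw_def
  -- basic facts
  have hf0 : f 0 = 0 := by simp [hf_def, Complex.zero_cpow hs_ne]
  have hf1 : f 1 = 1 := by simp [hf_def, hg1]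
  have hzf : ∀ n : ℕ, z n = f n := by
    intro n
    simp only [hz_def, hf_def, Complex.cpow_neg, div_eq_mul_inv]
  have hmulf : ∀ {m n : ℕ}, Nat.Coprime m n → f (m * n) = f m * f n := by
    intro m n hmn
    rcases Nat.eq_zero_or_pos m with hm | hm
    · subst hm
      rw [Nat.coprime_zero_left] at hmn
      subst hmn
      simp [hf1]
    rcases Nat.eq_zero_or_pos n with hn | hn
    · subst hn
      rw [Nat.coprime_zero_right] at hmn
      subst hmn
      simp [hf1]
    have hcast : ((m * n : ℕ) : ℂ) ^ s = (m : ℂ) ^ s * (n : ℂ) ^ s := by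
      have := Complex.mul_cpow_ofReal_nonneg (a := (m:ℝ)) (b := (n:ℝ))
        (Nat.cast_nonneg m) (Nat.cast_nonneg n) s
      push_cast at this ⊢
      exact this
    simp only [hf_def, hgmul m n hmn, hcast]
    rw [div_mul_div_comm]
  have hpe : ∀ p : ℕ, p.Prime → ∀ e : ℕ, f (p ^ e) = (z p) ^ e / (Nat.factorial e : ℂ) := by
    intro p hp e
    rcases Nat.eq_zero_or_pos e with he | he
    · subst he; simp [hf_def, hg1]
    · have hps : ((p : ℂ)) ^ s ≠ 0 := by
        intro h
        rcases (Complex.cpow_eq_zero_iff _ _).mp h with ⟨h1, -⟩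
        have hp0 : p = 0 := by exact_mod_cast h1
        exact hp.pos.ne' hp0
      simp only [hf_def, hz_def]
      rw [hgpk p e hp he, natCast_pow_cpow p e s, Complex.cpow_neg, mul_pow, inv_pow]
      field_simp
  have habs : ∀ n : ℕ, ‖g n‖ / (n : ℝ) ^ σ = ‖f n‖ := by
    intro n
    rcases Nat.eq_zero_or_pos n with hn | hn
    · subst hn
      rw [show f 0 = 0 from hf0]
      simp [Real.zero_rpow (by positivity : σ ≠ 0)]
    · have hn0 : (0:ℝ) < (n:ℝ) := by exact_mod_cast hn
      simp only [hf_def, norm_div]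
      congr 1
      rw [show ((n:ℕ):ℂ) = (((n:ℝ)):ℂ) by push_cast; rfl,
        Complex.norm_cpow_eq_rpow_re_of_pos hn0, hs_re]
  have hwf : ∀ p : ℕ, 0 < p → w p = ‖g p‖ * (p : ℝ) ^ (-σ) := by
    intro p hp
    have hp0 : (0:ℝ) < (p:ℝ) := by exact_mod_cast hp
    simp only [hw_def, hz_def, norm_mul]
    congr 1
    rw [show ((p:ℕ):ℂ) = (((p:ℝ)):ℂ) by push_cast; rfl,
      Complex.norm_cpow_eq_rpow_re_of_pos hp0]
    congr 1
    simp [hs_def]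
  have hwβ : ∀ p : ℕ, p.Prime → w p ≤ β * (p : ℝ) ^ (-σ) := by
    intro p hp
    rw [hwf p hp.pos]
    apply mul_le_mul_of_nonneg_right (hgβ p hp) (Real.rpow_nonneg (Nat.cast_nonneg p) _)
  have hnorm_pe : ∀ p : ℕ, p.Prime → ∀ e : ℕ,
      ‖f (p ^ e)‖ = (w p) ^ e / (Nat.factorial e : ℝ) := by
    intro p hp e
    rw [hpe p hp e]
    simp [hw_def, norm_div, norm_pow, Complex.norm_natCast]
  have hsum_pe : ∀ p : ℕ, p.Prime → Summable (fun e : ℕ => ‖f (p ^ e)‖) := by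
    intro p hp
    apply Summable.congr (Real.summable_pow_div_factorial (w p))
    intro e
    exact (hnorm_pe p hp e).symm
  have hhs_pe_c : ∀ p : ℕ, p.Prime → HasSum (fun e : ℕ => f (p ^ e)) (Complex.exp (z p)) := by
    intro p hp
    have h := NormedSpace.expSeries_div_hasSum_exp (z p)
    rw [← Complex.exp_eq_exp_ℂ] at h
    have heq : (fun e : ℕ => f (p ^ e)) = fun e : ℕ => z p ^ e / (Nat.factorial e : ℂ) :=
      funext (hpe p hp)
    rw [heq]
    exact h
  have hhs_pe_r : ∀ p : ℕ, p.Prime → HasSum (fun e : ℕ => ‖f (p ^ e)‖) (Real.exp (w p)) := by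
    intro p hp
    have h := NormedSpace.expSeries_div_hasSum_exp (w p)
    rw [← Real.exp_eq_exp_ℝ] at h
    have heq : (fun e : ℕ => ‖f (p ^ e)‖) = fun e : ℕ => (w p) ^ e / (Nat.factorial e : ℝ) :=
      funext (hnorm_pe p hp)
    rw [heq]
    exact h
  have hZsum : Summable (fun n : ℕ => (n : ℝ) ^ (-σ)) :=
    Real.summable_nat_rpow.mpr (by linarith)
  set Z : ℝ := ∑' n : ℕ, (n : ℝ) ^ (-σ) with hZ_def
  have hF1 : ‖f 1‖ = 1 := by rw [hf1]; simp
  have hFmul : ∀ {m n : ℕ}, Nat.Coprime m n → ‖f (m * n)‖ = ‖f m‖ * ‖f n‖ := by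
    intro m n h; rw [hmulf h, norm_mul]
  have hFsum_pe : ∀ {p : ℕ}, p.Prime → Summable (fun e : ℕ => ‖(‖f (p ^ e)‖ : ℝ)‖) := by
    intro p hp
    apply (hsum_pe p hp).congr
    intro e
    rw [Real.norm_of_nonneg (norm_nonneg _)]
  have key : ∀ M : ℕ, ∑ n ∈ range M, ‖f n‖ ≤ Real.exp (β * Z) := by
    intro M
    obtain ⟨hsm, hhs⟩ := EulerProduct.summable_and_hasSum_smoothNumbers_prod_primesBelow_tsum
      (f := fun n => ‖f n‖) hF1 hFmul hFsum_pe M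
    have hsm' : Summable (fun m : M.smoothNumbers => ‖f (m : ℕ)‖) := by
      apply hsm.congr
      intro m
      rw [Real.norm_of_nonneg (norm_nonneg _)]
    have hind : Summable ((M.smoothNumbers : Set ℕ).indicator (fun n => ‖f n‖)) :=
      summable_subtype_iff_indicator.mp hsm'
    have step1 : ∑ n ∈ range M, ‖f n‖
        ≤ ∑' m : M.smoothNumbers, ‖f (m : ℕ)‖ := by
      have hcongr : ∑ n ∈ range M, ‖f n‖
          = ∑ n ∈ range M, (M.smoothNumbers : Set ℕ).indicator (fun n => ‖f n‖) n := by
        apply Finset.sum_congr rfl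
        intro n hn
        rcases Nat.eq_zero_or_pos n with h0 | h0
        · subst h0
          rw [Set.indicator_of_notMem (by simp [Nat.smoothNumbers]), hf0, norm_zero]
        · rw [Set.indicator_of_mem]
          rw [Nat.mem_smoothNumbers']
          intro p _ hdvd
          exact lt_of_le_of_lt (Nat.le_of_dvd h0 hdvd) (mem_range.mp hn)
      calc ∑ n ∈ range M, ‖f n‖
          = ∑ n ∈ range M, (M.smoothNumbers : Set ℕ).indicator (fun n => ‖f n‖) n := hcongr
        _ ≤ ∑' n : ℕ, (M.smoothNumbers : Set ℕ).indicator (fun n => ‖f n‖) n :=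
            hind.sum_le_tsum _ (fun n _ => Set.indicator_nonneg (fun a _ => norm_nonneg _) n)
        _ = ∑' m : M.smoothNumbers, ‖f (m : ℕ)‖ := (_root_.tsum_subtype _ _).symm
    have step2 : ∑' m : M.smoothNumbers, ‖f (m : ℕ)‖
        = ∏ p ∈ M.primesBelow, Real.exp (w p) := by
      rw [hhs.tsum_eq]
      apply Finset.prod_congr rfl
      intro p hp
      exact (hhs_pe_r p (Nat.prime_of_mem_primesBelow hp)).tsum_eq
    have step3 : ∏ p ∈ M.primesBelow, Real.exp (w p) ≤ Real.exp (β * Z) := by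
      rw [← Real.exp_sum]
      apply Real.exp_le_exp.mpr
      calc ∑ p ∈ M.primesBelow, w p ≤ ∑ p ∈ M.primesBelow, β * (p : ℝ) ^ (-σ) :=
            Finset.sum_le_sum fun p hp => by
              have := hwβ p (Nat.prime_of_mem_primesBelow hp)
              exact this
        _ = β * ∑ p ∈ M.primesBelow, (p : ℝ) ^ (-σ) := by rw [Finset.mul_sum]
        _ ≤ β * Z := by
            apply mul_le_mul_of_nonneg_left _ hβ.le
            exact hZsum.sum_le_tsum _ (fun n _ => Real.rpow_nonneg (Nat.cast_nonneg n) _)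
    calc ∑ n ∈ range M, ‖f n‖ ≤ ∑' m : M.smoothNumbers, ‖f (m : ℕ)‖ := step1
      _ = ∏ p ∈ M.primesBelow, Real.exp (w p) := step2
      _ ≤ Real.exp (β * Z) := step3
  have hsum : Summable (fun n : ℕ => ‖f n‖) :=
    summable_of_sum_range_le (fun n => norm_nonneg _) key
  have hEP : HasProd (fun p : Nat.Primes => ∑' e : ℕ, f ((p : ℕ) ^ e)) (∑' n, f n) :=
    EulerProduct.eulerProduct_hasProd hf1 hmulf hsum hf0
  have heq1 : (fun p : Nat.Primes => ∑' e : ℕ, f ((p : ℕ) ^ e))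
      = fun p : Nat.Primes => Complex.exp (z (p : ℕ)) :=
    funext fun p => (hhs_pe_c (p : ℕ) p.2).tsum_eq
  rw [heq1] at hEP
  have hfsub : Summable (fun p : {p : ℕ | Nat.Prime p} => f (p : ℕ)) :=
    hsum.of_norm.subtype _
  have hzsub : Summable (fun p : Nat.Primes => z (p : ℕ)) :=
    Summable.congr hfsub (fun p => (hzf (p : ℕ)).symm)
  set T : ℂ := ∑' p : Nat.Primes, z (p : ℕ) with hT_def
  have hGT : ∑' n, f n = Complex.exp T := hEP.unique hzsub.hasSum.cexp
  -- real Euler product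
  have hsumnorm : Summable (fun n : ℕ => ‖(‖f n‖ : ℝ)‖) :=
    hsum.congr fun n => (Real.norm_of_nonneg (norm_nonneg _)).symm
  have hEPr : HasProd (fun p : Nat.Primes => ∑' e : ℕ, ‖f ((p : ℕ) ^ e)‖) (∑' n, ‖f n‖) :=
    EulerProduct.eulerProduct_hasProd hF1 hFmul hsumnorm (by rw [hf0, norm_zero])
  have heq2 : (fun p : Nat.Primes => ∑' e : ℕ, ‖f ((p : ℕ) ^ e)‖)
      = fun p : Nat.Primes => Real.exp (w (p : ℕ)) :=
    funext fun p => (hhs_pe_r (p : ℕ) p.2).tsum_eq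
  rw [heq2] at hEPr
  have hwsub : Summable (fun p : Nat.Primes => w (p : ℕ)) := by
    have h1 : Summable (fun p : {p : ℕ | Nat.Prime p} => ‖f (p : ℕ)‖) :=
      hsum.subtype _
    apply Summable.congr h1
    intro p
    show ‖f ↑p‖ = ‖z ↑p‖
    rw [hzf]
  set W : ℝ := ∑' p : Nat.Primes, w (p : ℕ) with hW_def
  have hG0 : ∑' n, ‖f n‖ = Real.exp W := hEPr.unique hwsub.hasSum.rexp
  have hTre : T.re = ∑' p : Nat.Primes, ((z (p : ℕ)).re) :=
    (Complex.hasSum_re hzsub.hasSum).tsum_eq.symm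
  have hresub : Summable (fun p : Nat.Primes => (z (p : ℕ)).re) :=
    ⟨T.re, Complex.hasSum_re hzsub.hasSum⟩
  -- final estimate
  set N : ℕ := ⌊Real.exp (1 / (σ - 1))⌋₊ with hN_def
  set P : Finset ℕ := (range (N + 1)).filter Nat.Prime with hP_def
  set E : ℕ → ℝ := fun q => ‖g q‖ - (g q * (q:ℂ) ^ (-((t:ℂ) * Complex.I))).re
    with hE_def
  set D : ℕ → ℝ := fun q => w q - (z q).re with hD_def
  have hD_nonneg : ∀ q : ℕ, 0 ≤ D q := by
    intro q
    have := Complex.re_le_norm (z q)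
    simp only [hD_def, hw_def]
    linarith
  have hDq : ∀ q : ℕ, 0 < q → D q = (q:ℝ) ^ (-σ) * E q := by
    intro q hq
    have hq0 : ((q:ℕ):ℂ) ≠ 0 := by
      simp only [ne_eq, Nat.cast_eq_zero]
      exact hq.ne'
    have hzsplit : z q = ((((q:ℝ) ^ (-σ) : ℝ)) : ℂ) * (g q * (q:ℂ) ^ (-((t:ℂ) * Complex.I))) := by
      have hcast : ((q:ℂ)) ^ (-(σ:ℂ)) = ((((q:ℝ) ^ (-σ) : ℝ)) : ℂ) := by
        rw [Complex.ofReal_cpow (Nat.cast_nonneg q) (-σ)]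
        push_cast
        rfl
      simp only [hz_def]
      rw [hs_def, show -((σ:ℂ) + (t:ℂ) * Complex.I) = (-(σ:ℂ)) + (-((t:ℂ) * Complex.I)) by ring,
        Complex.cpow_add _ _ hq0, hcast]
      ring
    have hre : (z q).re = (q:ℝ) ^ (-σ) * (g q * (q:ℂ) ^ (-((t:ℂ) * Complex.I))).re := by
      rw [hzsplit]
      simp [Complex.mul_re, Complex.ofReal_re, Complex.ofReal_im]
    simp only [hD_def, hE_def, hre, hwf q hq]
    ring
  have habs_one : ∀ q : ℕ, 0 < q → ‖(q:ℂ) ^ (-((t:ℂ) * Complex.I))‖ = 1 := by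
    intro q hq
    have hq0 : (0:ℝ) < (q:ℝ) := by exact_mod_cast hq
    rw [show ((q:ℕ):ℂ) = (((q:ℝ)):ℂ) by push_cast; rfl,
      Complex.norm_cpow_eq_rpow_re_of_pos hq0]
    simp
  have hE_le : ∀ q : ℕ, q.Prime → E q ≤ 2 * β := by
    intro q hq
    have h1 : |(g q * (q:ℂ) ^ (-((t:ℂ) * Complex.I))).re|
        ≤ ‖g q‖ := by
      calc |(g q * (q:ℂ) ^ (-((t:ℂ) * Complex.I))).re|
          ≤ ‖g q * (q:ℂ) ^ (-((t:ℂ) * Complex.I))‖ := Complex.abs_re_le_norm _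
        _ = ‖g q‖ * 1 := by rw [norm_mul, habs_one q hq.pos]
        _ = ‖g q‖ := mul_one _
    have h2 := hgβ q hq
    have := abs_le.mp h1
    simp only [hE_def]
    linarith
  have hE_nonneg : ∀ q : ℕ, q.Prime → 0 ≤ E q := by
    intro q hq
    have h1 : |(g q * (q:ℂ) ^ (-((t:ℂ) * Complex.I))).re|
        ≤ ‖g q‖ := by
      calc |(g q * (q:ℂ) ^ (-((t:ℂ) * Complex.I))).re|
          ≤ ‖g q * (q:ℂ) ^ (-((t:ℂ) * Complex.I))‖ := Complex.abs_re_le_norm _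
        _ = ‖g q‖ := by rw [norm_mul, habs_one q hq.pos, mul_one]
    have := abs_le.mp h1
    simp only [hE_def]
    linarith
  -- termwise bound
  have hterm : ∀ q ∈ P, E q / q - D q ≤ 2 * β * ((σ - 1) * (Real.log q / q)) := by
    intro q hqP
    have hq : q.Prime := (mem_filter.mp hqP).2
    have hq0 : (0:ℝ) < (q:ℝ) := by exact_mod_cast hq.pos
    have hq1 : (1:ℝ) ≤ (q:ℝ) := by exact_mod_cast hq.one_lt.le
    have hlogq : 0 ≤ Real.log q := Real.log_nonneg hq1
    have hsplit : (q:ℝ) ^ (-σ) = (1 / q) * (q:ℝ) ^ (1 - σ) := by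
      rw [one_div, ← Real.rpow_neg_one (q:ℝ), ← Real.rpow_add hq0]
      ring_nf
    have hexp : (q:ℝ) ^ (1 - σ) = Real.exp (Real.log q * (1 - σ)) := by
      rw [Real.rpow_def_of_pos hq0]
    have hle : 1 - (q:ℝ) ^ (1 - σ) ≤ (σ - 1) * Real.log q := by
      rw [hexp]
      have := Real.add_one_le_exp (Real.log q * (1 - σ))
      nlinarith
    have hge : 0 ≤ 1 - (q:ℝ) ^ (1 - σ) := by
      have : (q:ℝ) ^ (1 - σ) ≤ 1 := by
        apply Real.rpow_le_one_of_one_le_of_nonpos hq1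
        linarith
      linarith
    have hDqe := hDq q hq.pos
    have hEou : E q / q - D q = E q * ((1/q) * (1 - (q:ℝ) ^ (1 - σ))) := by
      rw [hDqe, hsplit]
      field_simp
    rw [hEou]
    calc E q * ((1/q) * (1 - (q:ℝ) ^ (1 - σ)))
        ≤ (2*β) * ((1/q) * ((σ - 1) * Real.log q)) := by
          apply mul_le_mul (hE_le q hq) _ _ (by positivity)
          · apply mul_le_mul_of_nonneg_left hle (by positivity)
          · apply mul_nonneg (by positivity) hge
      _ = 2 * β * ((σ - 1) * (Real.log q / q)) := by ring
  -- sum of D over P is at most W - T.re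
  have hDsub : Summable (fun p : Nat.Primes => D (p : ℕ)) := hwsub.sub hresub
  have hWT : W - T.re = ∑' p : Nat.Primes, D (p : ℕ) := by
    rw [hTre, hW_def]
    exact (Summable.tsum_sub hwsub hresub).symm
  have hDfin : ∑ q ∈ P, D q ≤ W - T.re := by
    rw [hWT]
    have hindsum : Summable ({q : ℕ | Nat.Prime q}.indicator D) :=
      summable_subtype_iff_indicator.mp hDsub
    have htse : ∑' p : Nat.Primes, D (p : ℕ)
        = ∑' q : ℕ, {q : ℕ | Nat.Prime q}.indicator D q :=
      _root_.tsum_subtype {q : ℕ | Nat.Prime q} D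
    rw [htse]
    calc ∑ q ∈ P, D q = ∑ q ∈ P, {q : ℕ | Nat.Prime q}.indicator D q := by
          apply Finset.sum_congr rfl
          intro q hq
          exact (Set.indicator_of_mem
            (show q ∈ {q : ℕ | Nat.Prime q} from (mem_filter.mp hq).2) D).symm
      _ ≤ ∑' q : ℕ, {q : ℕ | Nat.Prime q}.indicator D q :=
          hindsum.sum_le_tsum _ (fun q _ => Set.indicator_nonneg (fun a _ => hD_nonneg a) q)
  -- numeric bound
  have hlog2 : Real.log 2 < 0.6931471808 := Real.log_two_lt_d9
  have hlog2' : 0 < Real.log 2 := Real.log_pos (by norm_num)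
  have hlog4 : Real.log 4 = 2 * Real.log 2 := by
    rw [show (4:ℝ) = 2^2 by norm_num, Real.log_pow]
    push_cast; ring
  have hNbound : Real.log (N + 1) ≤ Real.log 2 + 1 / (σ - 1) := by
    have h1 : (N:ℝ) ≤ Real.exp (1 / (σ - 1)) := Nat.floor_le (Real.exp_pos _).le
    have h2 : (1:ℝ) ≤ Real.exp (1 / (σ - 1)) :=
      Real.one_le_exp (div_nonneg zero_le_one hσ0.le)
    calc Real.log (N + 1) ≤ Real.log (2 * Real.exp (1 / (σ - 1))) := by
          apply Real.log_le_log (by positivity)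
          linarith
      _ = Real.log 2 + 1 / (σ - 1) := by
          rw [Real.log_mul (by norm_num) (Real.exp_pos _).ne', Real.log_exp]
  have hmain : ∑ q ∈ P, E q / q ≤ 12 * β + (W - T.re) := by
    have h1 : ∑ q ∈ P, E q / q - ∑ q ∈ P, D q
        ≤ 2 * β * (σ - 1) * ∑ q ∈ P, Real.log q / q := by
      rw [← Finset.sum_sub_distrib]
      calc ∑ q ∈ P, (E q / q - D q) ≤ ∑ q ∈ P, 2 * β * ((σ - 1) * (Real.log q / q)) :=
            Finset.sum_le_sum hterm
        _ = 2 * β * (σ - 1) * ∑ q ∈ P, Real.log q / q := by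
            rw [Finset.mul_sum]
            apply Finset.sum_congr rfl
            intro q _
            ring
    have h2 : ∑ q ∈ P, Real.log q / q ≤ Real.log 4 * (2 + Real.log (N + 1)) := by
      have := mertens_bound N
      rw [hP_def]
      push_cast at this ⊢
      exact this
    have h3 : 2 * β * (σ - 1) * ∑ q ∈ P, Real.log q / q ≤ 12 * β := by
      have hσ1' : σ - 1 ≤ 1 := by linarith
      have hnn : (0:ℝ) ≤ ∑ q ∈ P, Real.log q / q := by
        apply Finset.sum_nonneg
        intro q hq
        have hq1 : (1:ℝ) ≤ (q:ℝ) := by exact_mod_cast (mem_filter.mp hq).2.one_lt.le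
        exact div_nonneg (Real.log_nonneg hq1) (by linarith)
      calc 2 * β * (σ - 1) * ∑ q ∈ P, Real.log q / q
          ≤ 2 * β * (σ - 1) * (Real.log 4 * (2 + Real.log (N + 1))) := by
            apply mul_le_mul_of_nonneg_left h2 (by positivity)
        _ ≤ 12 * β := by
            rw [hlog4]
            have hexp1 : (σ - 1) * (2 + Real.log (N + 1)) ≤ 3 + Real.log 2 := by
              have := hNbound
              have h4 : (σ - 1) * Real.log (N + 1) ≤ (σ - 1) * (Real.log 2 + 1 / (σ - 1)) :=
                mul_le_mul_of_nonneg_left hNbound hσ0.le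
              have h5 : (σ - 1) * (Real.log 2 + 1 / (σ - 1))
                  = (σ - 1) * Real.log 2 + 1 := by
                field_simp
              nlinarith [Real.log_nonneg (show (1:ℝ) ≤ (N:ℝ) + 1 by push_cast; linarith)]
            calc 2 * β * (σ - 1) * (2 * Real.log 2 * (2 + Real.log (N + 1)))
                = 4 * β * Real.log 2 * ((σ - 1) * (2 + Real.log (N + 1))) := by ring
              _ ≤ 4 * β * Real.log 2 * (3 + Real.log 2) := by
                  apply mul_le_mul_of_nonneg_left hexp1 (by positivity)
              _ = β * (4 * Real.log 2 * (3 + Real.log 2)) := by ring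
              _ ≤ β * 12 := mul_le_mul_of_nonneg_left (by nlinarith) hβ.le
              _ = 12 * β := by ring
    linarith
  have hS_eq : ∑ p ∈ P,
      (‖g p‖ - (g p * (p : ℂ) ^ (-((t:ℂ) * Complex.I))).re) / (p : ℝ)
      = ∑ q ∈ P, E q / q := rfl
  have hLHS : ‖∑' n : ℕ, g n / (n : ℂ) ^ s‖ = Real.exp T.re := by
    rw [show (∑' n : ℕ, g n / (n : ℂ) ^ s) = ∑' n, f n from rfl, hGT, Complex.norm_exp]
  have hRHS : (∑' n : ℕ, ‖g n‖ / (n : ℝ) ^ σ) = Real.exp W := by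
    rw [tsum_congr habs, hG0]
  calc ‖∑' n : ℕ, g n / (n : ℂ) ^ s‖ = Real.exp T.re := hLHS
    _ ≤ Real.exp (12 * β) * Real.exp W * Real.exp (-(∑ q ∈ P, E q / q)) := by
        rw [← Real.exp_add, ← Real.exp_add]
        apply Real.exp_le_exp.mpr
        linarith [hmain, hDfin]
    _ = Real.exp (12 * β) * (∑' n : ℕ, ‖g n‖ / (n : ℝ) ^ σ) *
          Real.exp (-(∑ p ∈ P,
            (‖g p‖ - (g p * (p : ℂ) ^ (-((t:ℂ) * Complex.I))).re) / (p : ℝ))) := by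
        rw [hRHS, hS_eq]

end Main

theorem stmt5 (β : ℝ) (hβ : 0 < β) :
    ∃ C > (0:ℝ), ∀ g : ℕ → ℂ, g 1 = 1 →
      (∀ (p k : ℕ), p.Prime → 1 ≤ k → g (p ^ k) = g p ^ k / (Nat.factorial k : ℂ)) →
      (∀ m n : ℕ, Nat.Coprime m n → g (m * n) = g m * g n) →
      (∀ p : ℕ, p.Prime → ‖g p‖ ≤ β) →
      ∀ σ t : ℝ, 1 < σ → σ ≤ 2 →
        ‖∑' n : ℕ, g n / (n : ℂ) ^ ((σ : ℂ) + t * Complex.I)‖ ≤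
          C * (∑' n : ℕ, ‖g n‖ / (n : ℝ) ^ σ) *
            Real.exp (- ∑ p ∈ (Finset.range (⌊Real.exp (1 / (σ - 1))⌋₊ + 1)).filter Nat.Prime,
              (‖g p‖ - (g p * (p : ℂ) ^ (-(t * Complex.I))).re) / (p : ℝ)) := by
  refine ⟨Real.exp (12 * β), Real.exp_pos _, ?_⟩
  intro g hg1 hgpk hgmul hgβ σ t hσ1 hσ2
  exact aux_main g σ t β hβ hg1 hgpk hgmul hgβ hσ1 hσ2
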